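/- Let k, a ∈ ℝ with k ≠ 2, and let L : ℝ[X] → ℝ be a linear functional such that L(D_{n,k}·D_{m,k}) = hₙ(k)·δ_{n,m} for all n, m ∈ ℕ, where h₀(k) = 2 − k and hₙ(k) = aⁿ for n ≥ 1. Denote μⱼ = L(Xʲ). Then: (i) μ₀ = 1/(2−k); (ii) μ_{2n+1} = 0 for all n ∈ ℕ; (iii) for all n ≥ 1, μ_{2n} = −Σ_{j=0}^{n−1} (((2−k)·n + k·j)/(j+n))·C(n+j, 2j)·(−a)^{n−j}·μ_{2j}. -/

import Mathlib

open Polynomial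

/-- The Dickson polynomial of the `(k+1)`-th kind with real parameters `k, a`,
as a polynomial in `ℝ[X]`, defined by the three-term recurrence. -/
noncomputable def dicksonP (k a : ℝ) : ℕ → Polynomial ℝ
  | 0 => C (2 - k)
  | 1 => X
  | n + 2 => X * dicksonP k a (n + 1) - C a * dicksonP k a n

/-- second-kind correction coefficient -/
def en (n i : ℕ) : ℕ :=
  if 0 < i ∧ 2 * i ≤ n then Nat.choose (n - i - 1) (i - 1) else 0

noncomputable def dCoef (k a : ℝ) (n i : ℕ) : ℝ :=
  ((Nat.choose (n - i) i : ℝ) + (1 - k) * (en n i : ℝ)) * (-a) ^ i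

lemma dCoef_head (k a : ℝ) (n : ℕ) : dCoef k a n 0 = 1 := by
  simp [dCoef, en]

lemma dCoef_eq_zero (k a : ℝ) (n i : ℕ) (h : n < 2 * i) : dCoef k a n i = 0 := by
  have h1 : Nat.choose (n - i) i = 0 := Nat.choose_eq_zero_of_lt (by omega)
  have h2 : en n i = 0 := by simp only [en]; rw [if_neg]; omega
  simp [dCoef, h1, h2]

lemma en_rec (n i : ℕ) (hn : 1 ≤ n) : en (n + 2) (i + 1) = en (n + 1) (i + 1) + en n i := by
  rcases Nat.eq_zero_or_pos i with rfl | hi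
  · simp only [en]
    rw [if_pos (by omega), if_pos (by omega), if_neg (by omega)]
    simp only [Nat.add_sub_cancel]
    norm_num
  · simp only [en]
    split_ifs with h1 h2 h3 h3' h2' h3'' h3'''
    · have e1 : n + 2 - (i + 1) - 1 = (n - i - 1) + 1 := by omega
      have e2 : i + 1 - 1 = (i - 1) + 1 := by omega
      have e3 : n + 1 - (i + 1) - 1 = n - i - 1 := by omega
      rw [e1, e2, e3, Nat.choose_succ_succ]
      exact Nat.add_comm _ _
    · omega
    · have e1 : n + 2 - (i + 1) - 1 = i := by omega
      have e2 : i + 1 - 1 = i := by omega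
      have e3 : n - i - 1 = i - 1 := by omega
      rw [e1, e2, e3, Nat.choose_self, Nat.choose_self]
    · omega
    · omega
    · omega
    · omega
    · rfl

lemma choose_rec (n i : ℕ) :
    (n + 1 - i).choose (i + 1) = (n - i).choose (i + 1) + (n - i).choose i := by
  rcases le_or_gt i n with h | h
  · have e : n + 1 - i = (n - i) + 1 := by omega
    rw [e, Nat.choose_succ_succ]
    exact Nat.add_comm _ _
  · have e1 : n + 1 - i ≤ 1 := by omega
    have e2 : n - i = 0 := by omega
    rw [e2]
    rw [Nat.choose_eq_zero_of_lt (by omega), Nat.choose_eq_zero_of_lt (by omega),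
      Nat.choose_eq_zero_of_lt (by omega)]

lemma dCoef_rec (k a : ℝ) (n i : ℕ) (hn : 1 ≤ n) :
    dCoef k a (n + 2) (i + 1) = dCoef k a (n + 1) (i + 1) + (-a) * dCoef k a n i := by
  have hA : (n + 2 - (i + 1)).choose (i + 1) =
      (n + 1 - (i + 1)).choose (i + 1) + (n - i).choose i := by
    have e1 : n + 2 - (i + 1) = n + 1 - i := by omega
    have e2 : n + 1 - (i + 1) = n - i := by omega
    rw [e1, e2, choose_rec]
  have hB := en_rec n i hn
  simp only [dCoef, hA, hB]
  push_cast
  ring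

lemma dicksonP_eq_sum (k a : ℝ) : ∀ n : ℕ, 1 ≤ n →
    dicksonP k a n = ∑ i ∈ Finset.range (n + 1), C (dCoef k a n i) * X ^ (n - 2 * i) := by
  have key : ∀ n : ℕ,
      (dicksonP k a (n + 1) = ∑ i ∈ Finset.range (n + 2), C (dCoef k a (n + 1) i) * X ^ (n + 1 - 2 * i)) ∧
      (dicksonP k a (n + 2) = ∑ i ∈ Finset.range (n + 3), C (dCoef k a (n + 2) i) * X ^ (n + 2 - 2 * i)) := by
    intro n
    induction n with
    | zero =>
      constructor
      · simp [dicksonP, Finset.sum_range_succ, dCoef, en]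
      · show X * X - C a * C (2 - k) = _
        rw [Finset.sum_range_succ, Finset.sum_range_succ, Finset.sum_range_succ,
          Finset.sum_range_zero]
        simp only [dCoef, en]
        norm_num [map_ofNat]
        ring
    | succ n ih =>
      obtain ⟨h1, h2⟩ := ih
      refine ⟨h2, ?_⟩
      have e3 : dicksonP k a (n + 3) = X * dicksonP k a (n + 2) - C a * dicksonP k a (n + 1) := rfl
      rw [e3, h1, h2, Finset.mul_sum, Finset.mul_sum]
      rw [Finset.sum_range_succ' (fun i => C (dCoef k a (n + 3) i) * X ^ (n + 3 - 2 * i)) (n + 3)]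
      rw [Finset.sum_range_succ' (fun i => X * (C (dCoef k a (n + 2) i) * X ^ (n + 2 - 2 * i))) (n + 2)]
      rw [Finset.sum_range_succ (fun i => C (dCoef k a (n + 3) (i + 1)) * X ^ (n + 3 - 2 * (i + 1))) (n + 2)]
      have hT : dCoef k a (n + 3) (n + 2 + 1) = 0 := dCoef_eq_zero _ _ _ _ (by omega)
      have hsum : ∑ i ∈ Finset.range (n + 2),
            (X * (C (dCoef k a (n + 2) (i + 1)) * X ^ (n + 2 - 2 * (i + 1)))
              - C a * (C (dCoef k a (n + 1) i) * X ^ (n + 1 - 2 * i)))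
          = ∑ i ∈ Finset.range (n + 2), C (dCoef k a (n + 3) (i + 1)) * X ^ (n + 3 - 2 * (i + 1)) := by
        refine Finset.sum_congr rfl fun i _ => ?_
        rcases le_or_gt (2 * i) n with h | h
        · have e1 : n + 2 - 2 * (i + 1) = n - 2 * i := by omega
          have e2 : n + 3 - 2 * (i + 1) = (n - 2 * i) + 1 := by omega
          have e5 : n + 1 - 2 * i = (n - 2 * i) + 1 := by omega
          rw [e1, e2, e5, dCoef_rec k a (n + 1) i (by omega), map_add, map_mul, map_neg]
          ring
        rcases le_or_gt (2 * i) (n + 1) with h' | h'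
        · have hmid : dCoef k a (n + 2) (i + 1) = 0 := dCoef_eq_zero _ _ _ _ (by omega)
          have e2 : n + 3 - 2 * (i + 1) = n + 1 - 2 * i := by omega
          rw [e2, dCoef_rec k a (n + 1) i (by omega), hmid, map_add, map_mul, map_neg]
          simp only [map_zero, zero_mul, mul_zero]
          ring
        · rw [dCoef_eq_zero k a (n + 1) i (by omega),
            dCoef_eq_zero k a (n + 2) (i + 1) (by omega),
            dCoef_eq_zero k a (n + 3) (i + 1) (by omega)]
          simp
      rw [hT]
      simp only [map_zero, zero_mul]
      rw [← hsum, Finset.sum_sub_distrib]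
      simp only [dCoef_head, map_one, one_mul, Nat.mul_zero, Nat.sub_zero]
      ring
  intro n hn
  obtain ⟨m, rfl⟩ : ∃ m, n = m + 1 := ⟨n - 1, by omega⟩
  exact (key m).1

lemma dCoef_even (k a : ℝ) (n j : ℕ) (hj : j < n) :
    dCoef k a (2 * n) (n - j) =
      (((2 - k) * n + k * j) / ((j : ℝ) + n)) * (Nat.choose (n + j) (2 * j)) * (-a) ^ (n - j) := by
  have h1 : 2 * n - (n - j) = n + j := by omega
  have h2 : en (2 * n) (n - j) = Nat.choose (n + j - 1) (n - j - 1) := by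
    simp only [en]
    rw [if_pos ⟨by omega, by omega⟩]
    congr 1
    omega
  have h3 : Nat.choose (n + j) (2 * j) = Nat.choose (n + j) (n - j) := by
    rw [← Nat.choose_symm (by omega : 2 * j ≤ n + j)]
    congr 1
    omega
  have key : (n + j) * Nat.choose (n + j - 1) (n - j - 1) = (n - j) * Nat.choose (n + j) (n - j) := by
    have h := Nat.add_one_mul_choose_eq (n + j - 1) (n - j - 1)
    have e : n + j - 1 + 1 = n + j := by omega
    have e' : n - j - 1 + 1 = n - j := by omega
    rw [e, e'] at h
    rw [h, Nat.mul_comm]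
  have keyR : ((n : ℝ) + j) * (Nat.choose (n + j - 1) (n - j - 1) : ℝ)
      = ((n : ℝ) - j) * (Nat.choose (n + j) (n - j) : ℝ) := by
    have h := congrArg (Nat.cast : ℕ → ℝ) key
    push_cast [Nat.cast_sub (by omega : j ≤ n)] at h
    linarith [h]
  have hnj : ((j : ℝ) + n) ≠ 0 := by
    have : (0 : ℝ) < n := by exact_mod_cast (by omega : 0 < n)
    have := Nat.cast_nonneg (α := ℝ) j
    linarith
  rw [dCoef, h1, h2, h3]
  rw [div_mul_eq_mul_div, div_mul_eq_mul_div, eq_div_iff hnj]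
  linear_combination ((1 : ℝ) - k) * (-a) ^ (n - j) * keyR

theorem dickson_moments_recurrence (k a : ℝ) (hk : k ≠ 2)
    (L : Polynomial ℝ →ₗ[ℝ] ℝ)
    (hL : ∀ n m : ℕ, L (dicksonP k a n * dicksonP k a m) =
      if n = m then (if n = 0 then 2 - k else a ^ n) else 0) :
    L (X ^ 0) = 1 / (2 - k) ∧
    (∀ n : ℕ, L (X ^ (2 * n + 1)) = 0) ∧
    (∀ n : ℕ, 1 ≤ n →
      L (X ^ (2 * n)) =
        -∑ j ∈ Finset.range n,
          (((2 - k) * n + k * j) / ((j : ℝ) + n)) * (Nat.choose (n + j) (2 * j)) *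
            (-a) ^ (n - j) * L (X ^ (2 * j))) := by
  have h2k : (2 : ℝ) - k ≠ 0 := sub_ne_zero.mpr (Ne.symm hk)
  have LC : ∀ (c : ℝ) (p : ℝ[X]), L (C c * p) = c * L p := by
    intro c p
    rw [← smul_eq_C_mul, map_smul, smul_eq_mul]
  -- part (i)
  have h00 := hL 0 0
  rw [if_pos rfl, if_pos rfl] at h00
  have hd0 : dicksonP k a 0 = C (2 - k) := rfl
  rw [hd0, ← C_mul, ← mul_one (C ((2 - k) * (2 - k))), LC] at h00
  have hmu0 : L (X ^ 0) = 1 / (2 - k) := by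
    rw [pow_zero, eq_div_iff h2k]
    have h' : (2 - k) * (L 1 * (2 - k)) = (2 - k) * 1 := by ring_nf; linear_combination h00
    exact mul_left_cancel₀ h2k h'
  -- L vanishes on dicksonP n for n ≥ 1
  have LD0 : ∀ n : ℕ, 1 ≤ n → L (dicksonP k a n) = 0 := by
    intro n hn
    have h := hL n 0
    rw [if_neg (by omega)] at h
    rw [hd0, mul_comm, LC] at h
    exact (mul_eq_zero.mp h).resolve_left h2k
  -- moment recurrence
  have Lmom : ∀ n : ℕ, 1 ≤ n →
      L (X ^ n) + ∑ i ∈ Finset.range n, dCoef k a n (i + 1) * L (X ^ (n - 2 * (i + 1))) = 0 := by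
    intro n hn
    have h := LD0 n hn
    rw [dicksonP_eq_sum k a n hn, map_sum] at h
    rw [Finset.sum_congr rfl (fun i _ => LC (dCoef k a n i) (X ^ (n - 2 * i)))] at h
    rw [Finset.sum_range_succ' (fun i => dCoef k a n i * L (X ^ (n - 2 * i))) n] at h
    rw [dCoef_head, one_mul] at h
    simp only [Nat.mul_zero, Nat.sub_zero] at h
    linarith [h]
  refine ⟨hmu0, ?_, ?_⟩
  · -- part (ii)
    intro n
    induction n using Nat.strong_induction_on with
    | _ n ih =>
      have h := Lmom (2 * n + 1) (by omega)
      have hz : ∀ i ∈ Finset.range (2 * n + 1),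
          dCoef k a (2 * n + 1) (i + 1) * L (X ^ (2 * n + 1 - 2 * (i + 1))) = 0 := by
        intro i _
        rcases le_or_gt (2 * (i + 1)) (2 * n + 1) with hle | hlt
        · have he : 2 * n + 1 - 2 * (i + 1) = 2 * (n - i - 1) + 1 := by omega
          rw [he, ih (n - i - 1) (by omega), mul_zero]
        · rw [dCoef_eq_zero _ _ _ _ hlt, zero_mul]
      rw [Finset.sum_eq_zero hz, add_zero] at h
      exact h
  · -- part (iii)
    intro n hn
    have h := Lmom (2 * n) (by omega)
    have hsub : ∑ i ∈ Finset.range (2 * n),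
          dCoef k a (2 * n) (i + 1) * L (X ^ (2 * n - 2 * (i + 1)))
        = ∑ i ∈ Finset.range n,
          dCoef k a (2 * n) (i + 1) * L (X ^ (2 * n - 2 * (i + 1))) := by
      symm
      refine Finset.sum_subset (Finset.range_subset_range.mpr (by omega)) ?_
      intro i _ hi
      simp only [Finset.mem_range, not_lt] at hi
      rw [dCoef_eq_zero _ _ _ _ (by omega), zero_mul]
    rw [hsub] at h
    rw [← Finset.sum_range_reflect (fun i => dCoef k a (2 * n) (i + 1) * L (X ^ (2 * n - 2 * (i + 1)))) n] at h
    have hco : ∀ j ∈ Finset.range n,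
        dCoef k a (2 * n) (n - 1 - j + 1) * L (X ^ (2 * n - 2 * (n - 1 - j + 1)))
          = (((2 - k) * n + k * j) / ((j : ℝ) + n)) * (Nat.choose (n + j) (2 * j)) *
            (-a) ^ (n - j) * L (X ^ (2 * j)) := by
      intro j hj
      simp only [Finset.mem_range] at hj
      have e1 : n - 1 - j + 1 = n - j := by omega
      have e2 : 2 * n - 2 * (n - j) = 2 * j := by omega
      rw [e1, e2, dCoef_even k a n j hj]
    rw [Finset.sum_congr rfl hco] at h
    linarith [h]
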